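/- Let n ≥ 2 and m = 2k. Suppose the coefficients (c_γ)_{|γ|=m} of a homogeneous polynomial on ℝ^n satisfy, for every multi-index ρ with |ρ| = m and every 1 ≤ j ≤ n−1, the relation c_{ρ+e_n−e_j}(ρ_n+1) − c_{ρ−e_n+e_j}(ρ_j+1) = 0 (with the convention that c with a negative index entry is zero). Then c_γ = 0 for every γ with |γ| = m having at least one odd entry. -/

import Mathlib

private lemma sum_add'' {d : ℕ} (f g : Fin (d + 2) →₀ ℕ) :
    ((f + g).sum fun _ x => x) = (f.sum fun _ x => x) + (g.sum fun _ x => x) :=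
  Finsupp.sum_add_index' (fun _ => rfl) (fun _ _ _ => rfl)

private lemma sum_single'' {d : ℕ} (a : Fin (d + 2)) (n : ℕ) :
    ((Finsupp.single a n).sum fun _ x => x) = n :=
  Finsupp.sum_single_index rfl

private lemma lemA (d k : ℕ) (c : (Fin (d + 2) →₀ ℕ) → ℝ)
    (hrel : ∀ ρ : Fin (d + 2) →₀ ℕ, (ρ.sum fun _ x => x) = 2 * k →
      ∀ j : Fin (d + 1),
        (if 0 < ρ j.castSucc then
            c (ρ + Finsupp.single (Fin.last (d + 1)) 1 - Finsupp.single j.castSucc 1) *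
              ((ρ (Fin.last (d + 1)) : ℝ) + 1)
          else 0) -
        (if 0 < ρ (Fin.last (d + 1)) then
            c (ρ - Finsupp.single (Fin.last (d + 1)) 1 + Finsupp.single j.castSucc 1) *
              ((ρ j.castSucc : ℝ) + 1)
          else 0) = 0) :
    ∀ v (γ : Fin (d + 2) →₀ ℕ), γ (Fin.last (d + 1)) = v →
      (γ.sum fun _ x => x) = 2 * k → Odd v → c γ = 0 := by
  intro v
  induction v using Nat.strong_induction_on with
  | _ v ih =>
  intro γ hv hsum hodd
  obtain ⟨t, ht⟩ := hodd
  have hv1 : 1 ≤ v := by omega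
  have hJL : ((0 : Fin (d + 1)).castSucc : Fin (d + 2)) ≠ Fin.last (d + 1) :=
    (Fin.castSucc_lt_last 0).ne
  have hle : Finsupp.single (Fin.last (d + 1)) 1 ≤ γ := by
    rw [Finsupp.single_le_iff]; omega
  have hγδ : (γ - Finsupp.single (Fin.last (d + 1)) 1) + Finsupp.single (Fin.last (d + 1)) 1
      = γ := tsub_add_cancel_of_le hle
  set δ := γ - Finsupp.single (Fin.last (d + 1)) 1 with hδdef
  have hδL : δ (Fin.last (d + 1)) + 1 = v := by
    have h := congrArg (fun f => f (Fin.last (d + 1))) hγδ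
    simpa [Finsupp.add_apply, Finsupp.single_eq_same, hv] using h
  have hsumδ : (δ.sum fun _ x => x) + 1 = 2 * k := by
    rw [← hγδ, sum_add'', sum_single''] at hsum; exact hsum
  have hρsum : ((δ + Finsupp.single ((0 : Fin (d + 1)).castSucc) 1).sum fun _ x => x)
      = 2 * k := by
    rw [sum_add'', sum_single'']; omega
  have key := hrel _ hρsum 0
  have e1 : ((δ + Finsupp.single ((0 : Fin (d + 1)).castSucc) 1 : Fin (d + 2) →₀ ℕ))
      ((0 : Fin (d + 1)).castSucc) = δ ((0 : Fin (d + 1)).castSucc) + 1 := by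
    rw [Finsupp.add_apply, Finsupp.single_eq_same]
  have e2 : ((δ + Finsupp.single ((0 : Fin (d + 1)).castSucc) 1 : Fin (d + 2) →₀ ℕ))
      (Fin.last (d + 1)) = δ (Fin.last (d + 1)) := by
    rw [Finsupp.add_apply, Finsupp.single_eq_of_ne hJL.symm, add_zero]
  have e3 : δ + Finsupp.single ((0 : Fin (d + 1)).castSucc) 1
      + Finsupp.single (Fin.last (d + 1)) 1 - Finsupp.single ((0 : Fin (d + 1)).castSucc) 1
      = γ := by
    rw [add_right_comm δ (Finsupp.single ((0 : Fin (d + 1)).castSucc) 1)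
      (Finsupp.single (Fin.last (d + 1)) 1), add_tsub_cancel_right, hγδ]
  rw [e1, e2, e3, if_pos (Nat.succ_pos _)] at key
  rcases Nat.lt_or_ge v 2 with h2 | h2
  · -- v = 1
    have hδL0 : δ (Fin.last (d + 1)) = 0 := by omega
    rw [hδL0, if_neg (lt_irrefl 0)] at key
    have : c γ * (((0 : ℕ) : ℝ) + 1) - 0 = 0 := key
    simpa using this
  · -- v ≥ 3
    have hδL1 : 0 < δ (Fin.last (d + 1)) := by omega
    have hle2 : Finsupp.single (Fin.last (d + 1)) 1 ≤ δ := by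
      rw [Finsupp.single_le_iff]; omega
    have hσ : (δ - Finsupp.single (Fin.last (d + 1)) 1) + Finsupp.single (Fin.last (d + 1)) 1
        = δ := tsub_add_cancel_of_le hle2
    have hσL : ((δ - Finsupp.single (Fin.last (d + 1)) 1 : Fin (d + 2) →₀ ℕ))
        (Fin.last (d + 1)) + 1 = δ (Fin.last (d + 1)) := by
      have h := congrArg (fun f => f (Fin.last (d + 1))) hσ
      simpa [Finsupp.add_apply, Finsupp.single_eq_same] using h
    have hsumσ : ((δ - Finsupp.single (Fin.last (d + 1)) 1).sum fun _ x => x) + 1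
        = (δ.sum fun _ x => x) := by
      conv_rhs => rw [← hσ]
      rw [sum_add'', sum_single'']
    have e4 : δ + Finsupp.single ((0 : Fin (d + 1)).castSucc) 1
        - Finsupp.single (Fin.last (d + 1)) 1 + Finsupp.single ((0 : Fin (d + 1)).castSucc) 1
        = ((δ - Finsupp.single (Fin.last (d + 1)) 1)
            + Finsupp.single ((0 : Fin (d + 1)).castSucc) 1)
          + Finsupp.single ((0 : Fin (d + 1)).castSucc) 1 := by
      conv_lhs => rw [← hσ]
      rw [add_right_comm (δ - Finsupp.single (Fin.last (d + 1)) 1)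
        (Finsupp.single (Fin.last (d + 1)) 1) (Finsupp.single ((0 : Fin (d + 1)).castSucc) 1),
        add_tsub_cancel_right]
    have hsumγ' : ((((δ - Finsupp.single (Fin.last (d + 1)) 1)
          + Finsupp.single ((0 : Fin (d + 1)).castSucc) 1)
          + Finsupp.single ((0 : Fin (d + 1)).castSucc) 1).sum fun _ x => x) = 2 * k := by
      rw [sum_add'', sum_add'', sum_single'']; omega
    have hγ'L : ((((δ - Finsupp.single (Fin.last (d + 1)) 1)
          + Finsupp.single ((0 : Fin (d + 1)).castSucc) 1)
          + Finsupp.single ((0 : Fin (d + 1)).castSucc) 1 : Fin (d + 2) →₀ ℕ))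
          (Fin.last (d + 1)) = v - 2 := by
      simp only [Finsupp.add_apply, Finsupp.single_eq_of_ne hJL.symm, add_zero]
      omega
    have hcγ' : c (((δ - Finsupp.single (Fin.last (d + 1)) 1)
          + Finsupp.single ((0 : Fin (d + 1)).castSucc) 1)
          + Finsupp.single ((0 : Fin (d + 1)).castSucc) 1) = 0 := by
      refine ih (v - 2) (by omega) _ hγ'L hsumγ' ⟨t - 1, by omega⟩
    rw [e4, hcγ', zero_mul, if_pos hδL1, sub_zero] at key
    refine (mul_eq_zero.mp key).resolve_right ?_
    positivity

private lemma lemB (d k : ℕ) (c : (Fin (d + 2) →₀ ℕ) → ℝ)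
    (hrel : ∀ ρ : Fin (d + 2) →₀ ℕ, (ρ.sum fun _ x => x) = 2 * k →
      ∀ j : Fin (d + 1),
        (if 0 < ρ j.castSucc then
            c (ρ + Finsupp.single (Fin.last (d + 1)) 1 - Finsupp.single j.castSucc 1) *
              ((ρ (Fin.last (d + 1)) : ℝ) + 1)
          else 0) -
        (if 0 < ρ (Fin.last (d + 1)) then
            c (ρ - Finsupp.single (Fin.last (d + 1)) 1 + Finsupp.single j.castSucc 1) *
              ((ρ j.castSucc : ℝ) + 1)
          else 0) = 0) (j : Fin (d + 1)) :
    ∀ v (γ : Fin (d + 2) →₀ ℕ), γ j.castSucc = v →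
      (γ.sum fun _ x => x) = 2 * k → Odd v → c γ = 0 := by
  intro v
  induction v using Nat.strong_induction_on with
  | _ v ih =>
  intro γ hv hsum hodd
  obtain ⟨t, ht⟩ := hodd
  have hv1 : 1 ≤ v := by omega
  have hLJ : Fin.last (d + 1) ≠ (j.castSucc : Fin (d + 2)) := (Fin.castSucc_lt_last j).ne'
  have hle : Finsupp.single j.castSucc 1 ≤ γ := by
    rw [Finsupp.single_le_iff]; omega
  have hγδ : (γ - Finsupp.single j.castSucc 1) + Finsupp.single j.castSucc 1 = γ :=
    tsub_add_cancel_of_le hle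
  set δ := γ - Finsupp.single j.castSucc 1 with hδdef
  have hδJ : δ j.castSucc + 1 = v := by
    have h := congrArg (fun f => f j.castSucc) hγδ
    simpa [Finsupp.add_apply, Finsupp.single_eq_same, hv] using h
  have hsumδ : (δ.sum fun _ x => x) + 1 = 2 * k := by
    rw [← hγδ, sum_add'', sum_single''] at hsum; exact hsum
  have hρsum : ((δ + Finsupp.single (Fin.last (d + 1)) 1).sum fun _ x => x) = 2 * k := by
    rw [sum_add'', sum_single'']; omega
  have key := hrel _ hρsum j
  have e1 : ((δ + Finsupp.single (Fin.last (d + 1)) 1 : Fin (d + 2) →₀ ℕ)) (Fin.last (d + 1))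
      = δ (Fin.last (d + 1)) + 1 := by
    rw [Finsupp.add_apply, Finsupp.single_eq_same]
  have e2 : ((δ + Finsupp.single (Fin.last (d + 1)) 1 : Fin (d + 2) →₀ ℕ)) j.castSucc
      = δ j.castSucc := by
    rw [Finsupp.add_apply, Finsupp.single_eq_of_ne hLJ.symm, add_zero]
  have e3 : δ + Finsupp.single (Fin.last (d + 1)) 1 - Finsupp.single (Fin.last (d + 1)) 1
      + Finsupp.single j.castSucc 1 = γ := by
    rw [add_tsub_cancel_right, hγδ]
  rw [e1, e2, e3, if_pos (Nat.succ_pos _)] at key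
  rcases Nat.lt_or_ge v 2 with h2 | h2
  · -- v = 1
    have hδJ0 : δ j.castSucc = 0 := by omega
    rw [hδJ0, if_neg (lt_irrefl 0)] at key
    have : (0 : ℝ) - c γ * (((0 : ℕ) : ℝ) + 1) = 0 := key
    have h' : c γ * (((0 : ℕ) : ℝ) + 1) = 0 := by linarith
    simpa using h'
  · -- v ≥ 3
    have hδJ1 : 0 < δ j.castSucc := by omega
    have hle2 : Finsupp.single j.castSucc 1 ≤ δ := by
      rw [Finsupp.single_le_iff]; omega
    have hσ : (δ - Finsupp.single j.castSucc 1) + Finsupp.single j.castSucc 1 = δ :=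
      tsub_add_cancel_of_le hle2
    have hσJ : ((δ - Finsupp.single j.castSucc 1 : Fin (d + 2) →₀ ℕ)) j.castSucc + 1
        = δ j.castSucc := by
      have h := congrArg (fun f => f j.castSucc) hσ
      simpa [Finsupp.add_apply, Finsupp.single_eq_same] using h
    have hsumσ : ((δ - Finsupp.single j.castSucc 1).sum fun _ x => x) + 1
        = (δ.sum fun _ x => x) := by
      conv_rhs => rw [← hσ]
      rw [sum_add'', sum_single'']
    have e4 : δ + Finsupp.single (Fin.last (d + 1)) 1 + Finsupp.single (Fin.last (d + 1)) 1
        - Finsupp.single j.castSucc 1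
        = ((δ - Finsupp.single j.castSucc 1) + Finsupp.single (Fin.last (d + 1)) 1)
          + Finsupp.single (Fin.last (d + 1)) 1 := by
      conv_lhs => rw [← hσ]
      rw [add_right_comm (δ - Finsupp.single j.castSucc 1) (Finsupp.single j.castSucc 1)
        (Finsupp.single (Fin.last (d + 1)) 1),
        add_right_comm ((δ - Finsupp.single j.castSucc 1)
          + Finsupp.single (Fin.last (d + 1)) 1) (Finsupp.single j.castSucc 1)
          (Finsupp.single (Fin.last (d + 1)) 1),
        add_tsub_cancel_right]
    have hsumγ' : ((((δ - Finsupp.single j.castSucc 1)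
          + Finsupp.single (Fin.last (d + 1)) 1)
          + Finsupp.single (Fin.last (d + 1)) 1).sum fun _ x => x) = 2 * k := by
      rw [sum_add'', sum_add'', sum_single'']; omega
    have hγ'J : ((((δ - Finsupp.single j.castSucc 1)
          + Finsupp.single (Fin.last (d + 1)) 1)
          + Finsupp.single (Fin.last (d + 1)) 1 : Fin (d + 2) →₀ ℕ)) j.castSucc = v - 2 := by
      simp only [Finsupp.add_apply, Finsupp.single_eq_of_ne hLJ.symm, add_zero]
      omega
    have hcγ' : c (((δ - Finsupp.single j.castSucc 1)
          + Finsupp.single (Fin.last (d + 1)) 1)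
          + Finsupp.single (Fin.last (d + 1)) 1) = 0 := by
      refine ih (v - 2) (by omega) _ hγ'J hsumγ' ⟨t - 1, by omega⟩
    rw [e4, hcγ', zero_mul, if_pos hδJ1, zero_sub, neg_eq_zero] at key
    refine (mul_eq_zero.mp key).resolve_right ?_
    positivity

/-- If the coefficients `(c_γ)` of a homogeneous polynomial of degree `m = 2k` in `n = d+2`
variables satisfy the relations `c_{ρ+e_n-e_j}(ρ_n+1) - c_{ρ-e_n+e_j}(ρ_j+1) = 0` for all
`|ρ| = 2k` and `1 ≤ j ≤ n-1` (terms with a negative index entry being absent), then `c_γ`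
vanishes for every `γ` of degree `2k` having at least one odd entry. -/
theorem coeff_vanish_on_odd_indices (d k : ℕ) (c : (Fin (d + 2) →₀ ℕ) → ℝ)
    (hrel : ∀ ρ : Fin (d + 2) →₀ ℕ, (ρ.sum fun _ x => x) = 2 * k →
      ∀ j : Fin (d + 1),
        (if 0 < ρ j.castSucc then
            c (ρ + Finsupp.single (Fin.last (d + 1)) 1 - Finsupp.single j.castSucc 1) *
              ((ρ (Fin.last (d + 1)) : ℝ) + 1)
          else 0) -
        (if 0 < ρ (Fin.last (d + 1)) then
            c (ρ - Finsupp.single (Fin.last (d + 1)) 1 + Finsupp.single j.castSucc 1) *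
              ((ρ j.castSucc : ℝ) + 1)
          else 0) = 0) :
    ∀ γ : Fin (d + 2) →₀ ℕ, (γ.sum fun _ x => x) = 2 * k →
      (∃ i, Odd (γ i)) → c γ = 0 := by
  intro γ hsum h
  obtain ⟨i, hi⟩ := h
  induction i using Fin.lastCases with
  | last => exact lemA d k c hrel _ γ rfl hsum hi
  | cast j => exact lemB d k c hrel j _ γ rfl hsum hi
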